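/- Define the convolution on M_n(ℂ) ⊗ M_n(ℂ) by x * y := F⁻¹(F(y)F(x)) with F(E_{kℓ} ⊗ E_{pq}) = E_{ℓq} ⊗ E_{kp}, and let tr be the normalized trace. Then the Frobenius reciprocity identity tr((x * y) z) = tr(x (z * ρ(y))) holds for all x, y, z ∈ M_n(ℂ) ⊗ M_n(ℂ), where ρ(E_{ij} ⊗ E_{kℓ}) = E_{ℓk} ⊗ E_{ji} is the rotation map. -/

import Mathlib

open Matrix
open scoped Kronecker

/-- The normalized trace on matrices (`tr 1 = 1`). -/
noncomputable def ntr {I : Type*} [Fintype I] (x : Matrix I I ℂ) : ℂ :=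
  (Fintype.card I : ℂ)⁻¹ * Matrix.trace x

lemma kron_std {n : ℕ} (k l p q : Fin n) :
    Matrix.single k l (1 : ℂ) ⊗ₖ Matrix.single p q (1 : ℂ) =
      Matrix.single (k, p) (l, q) (1 : ℂ) := by
  ext ⟨a, b⟩ ⟨c, d⟩
  simp [Matrix.kroneckerMap_apply, Matrix.single, Prod.ext_iff,
    ite_and, and_assoc]
  aesop

lemma entry_formula {n : ℕ}
    (T : Matrix (Fin n × Fin n) (Fin n × Fin n) ℂ →ₗ[ℂ]
      Matrix (Fin n × Fin n) (Fin n × Fin n) ℂ)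
    (g : ((Fin n × Fin n) × (Fin n × Fin n)) ≃ ((Fin n × Fin n) × (Fin n × Fin n)))
    (hT : ∀ i j, T (Matrix.single i j (1 : ℂ)) =
      Matrix.single (g (i, j)).1 (g (i, j)).2 (1 : ℂ))
    (m : Matrix (Fin n × Fin n) (Fin n × Fin n) ℂ) (a c : Fin n × Fin n) :
    T m a c = m (g.symm (a, c)).1 (g.symm (a, c)).2 := by
  conv_lhs => rw [matrix_eq_sum_single m]
  have : ∀ (i j : Fin n × Fin n),
      Matrix.single i j (m i j) = m i j • Matrix.single i j (1 : ℂ) := by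
    intro i j
    rw [smul_single, smul_eq_mul, mul_one]
  simp_rw [this, map_sum, _root_.map_smul, hT]
  rw [← Fintype.sum_prod_type']
  simp only [Matrix.sum_apply, Matrix.smul_apply, smul_eq_mul]
  rw [← Equiv.sum_comp g.symm
    (fun p => m p.1 p.2 * Matrix.single (g p).1 (g p).2 (1 : ℂ) a c)]
  simp only [Equiv.apply_symm_apply]
  rw [Finset.sum_eq_single (a, c)]
  · simp [Matrix.single]
  · intro q _ hq
    have : ¬(q.1 = a ∧ q.2 = c) := by
      rintro ⟨h1, h2⟩; exact hq (Prod.ext h1 h2)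
    simp [Matrix.single, Matrix.of_apply]
    tauto
  · simp

/-- Frobenius reciprocity: with the convolution `x * y := F⁻¹(F(y)F(x))`
and the rotation `ρ`, one has `tr((x * y) z) = tr(x (z * ρ(y)))`. -/
theorem stmt19 (n : ℕ)
    (F G : Matrix (Fin n × Fin n) (Fin n × Fin n) ℂ →ₗ[ℂ]
      Matrix (Fin n × Fin n) (Fin n × Fin n) ℂ)
    (hF : ∀ k l p q : Fin n,
      F (Matrix.single k l (1 : ℂ) ⊗ₖ Matrix.single p q (1 : ℂ)) =
        Matrix.single l q (1 : ℂ) ⊗ₖ Matrix.single k p (1 : ℂ))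
    (hG : ∀ k l p q : Fin n,
      G (Matrix.single k l (1 : ℂ) ⊗ₖ Matrix.single p q (1 : ℂ)) =
        Matrix.single p k (1 : ℂ) ⊗ₖ Matrix.single q l (1 : ℂ))
    (ρ : Matrix (Fin n × Fin n) (Fin n × Fin n) ℂ →ₗ[ℂ]
      Matrix (Fin n × Fin n) (Fin n × Fin n) ℂ)
    (hρ : ∀ i j k l : Fin n,
      ρ (Matrix.single i j (1 : ℂ) ⊗ₖ Matrix.single k l (1 : ℂ)) =
        Matrix.single l k (1 : ℂ) ⊗ₖ Matrix.single j i (1 : ℂ))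
    (x y z : Matrix (Fin n × Fin n) (Fin n × Fin n) ℂ) :
    ntr (G (F y * F x) * z) = ntr (x * G (F (ρ y) * F z)) := by
  -- the three permutation equivalences
  let gF : ((Fin n × Fin n) × (Fin n × Fin n)) ≃ ((Fin n × Fin n) × (Fin n × Fin n)) :=
    ⟨fun p => ((p.2.1, p.1.1), (p.2.2, p.1.2)),
     fun p => ((p.1.2, p.2.2), (p.1.1, p.2.1)),
     fun p => rfl, fun p => rfl⟩
  let gG : ((Fin n × Fin n) × (Fin n × Fin n)) ≃ ((Fin n × Fin n) × (Fin n × Fin n)) :=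
    ⟨fun p => ((p.1.2, p.2.2), (p.1.1, p.2.1)),
     fun p => ((p.2.1, p.1.1), (p.2.2, p.1.2)),
     fun p => rfl, fun p => rfl⟩
  let gR : ((Fin n × Fin n) × (Fin n × Fin n)) ≃ ((Fin n × Fin n) × (Fin n × Fin n)) :=
    ⟨fun p => ((p.2.2, p.2.1), (p.1.2, p.1.1)),
     fun p => ((p.2.2, p.2.1), (p.1.2, p.1.1)),
     fun p => rfl, fun p => rfl⟩
  have hFm : ∀ (m : Matrix (Fin n × Fin n) (Fin n × Fin n) ℂ) (a c : Fin n × Fin n),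
      F m a c = m (a.2, c.2) (a.1, c.1) := by
    intro m a c
    have := entry_formula F gF (fun i j => by
      rw [← kron_std, hF, kron_std]; rfl) m a c
    simpa [gF] using this
  have hGm : ∀ (m : Matrix (Fin n × Fin n) (Fin n × Fin n) ℂ) (a c : Fin n × Fin n),
      G m a c = m (c.1, a.1) (c.2, a.2) := by
    intro m a c
    have := entry_formula G gG (fun i j => by
      rw [← kron_std, hG, kron_std]; rfl) m a c
    simpa [gG] using this
  have hRm : ∀ (m : Matrix (Fin n × Fin n) (Fin n × Fin n) ℂ) (a c : Fin n × Fin n),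
      ρ m a c = m (c.2, c.1) (a.2, a.1) := by
    intro m a c
    have := entry_formula ρ gR (fun i j => by
      rw [← kron_std, hρ, kron_std]; rfl) m a c
    simpa [gR] using this
  unfold ntr
  congr 1
  simp only [Matrix.trace, Matrix.diag, Matrix.mul_apply, hFm, hGm, hRm]
  simp_rw [Finset.sum_mul, Finset.mul_sum]
  have expand : ∀ (f : (Fin n × Fin n) → (Fin n × Fin n) → (Fin n × Fin n) → ℂ),
      (∑ u, ∑ v, ∑ w, f u v w)
        = ∑ p : (Fin n × Fin n) × (Fin n × Fin n) × (Fin n × Fin n), f p.1 p.2.1 p.2.2 := by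
    intro f
    symm
    refine (Fintype.sum_prod_type
      (f := fun p : (Fin n × Fin n) × ((Fin n × Fin n) × (Fin n × Fin n)) =>
        f p.1 p.2.1 p.2.2)).trans ?_
    exact Finset.sum_congr rfl fun u _ =>
      Fintype.sum_prod_type (f := fun q : (Fin n × Fin n) × (Fin n × Fin n) => f u q.1 q.2)
  rw [expand, expand]
  let e : ((Fin n × Fin n) × (Fin n × Fin n) × (Fin n × Fin n))
      ≃ ((Fin n × Fin n) × (Fin n × Fin n) × (Fin n × Fin n)) :=
    ⟨fun p => ((p.2.2.1, p.1.2), (p.2.2.2, p.2.1.2), (p.2.1.1, p.1.1)),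
     fun p => ((p.2.2.2, p.1.2), (p.2.2.1, p.2.1.2), (p.1.1, p.2.1.1)),
     fun p => rfl, fun p => rfl⟩
  rw [← Equiv.sum_comp e]
  refine Finset.sum_congr rfl fun p _ => ?_
  simp only [e, Equiv.coe_fn_mk]
  ring
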